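/- Let A = C + D₁ be a compact Hermitian operator with ‖A‖ = 1 on a separable Hilbert space, and suppose there exists a nonzero Hermitian trace-class X with zero diagonal entries such that tr(XA) = ‖X‖₁. Then X commutes with A; moreover, writing E₊, E₋ for the spectral projections of A onto the eigenvalues 1 and -1, one has E₊X⁺ = X⁺ and E₋X⁻ = X⁻, where X = X⁺ - X⁻ is the Jordan decomposition of X. -/

import Mathlib

open scoped InnerProductSpace
open ContinuousLinearMap

noncomputable section

variable {H : Type*} [NormedAddCommGroup H] [InnerProductSpace ℂ H] [CompleteSpace H]

/-- The absolute value `|A| = (A^*A)^{1/2}` of an operator. -/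
def opAbs (A : H →L[ℂ] H) : H →L[ℂ] H := CFC.sqrt (ContinuousLinearMap.adjoint A * A)

/-- The trace of an operator computed in the Hilbert basis `e`. -/
def opTrace (e : HilbertBasis ℕ ℂ H) (A : H →L[ℂ] H) : ℂ := ∑' n, ⟪e n, A (e n)⟫_ℂ

/-- The trace norm `‖A‖₁ = tr |A|` computed in the Hilbert basis `e`. -/
def traceNorm (e : HilbertBasis ℕ ℂ H) (A : H →L[ℂ] H) : ℝ :=
  ∑' n, (⟪e n, opAbs A (e n)⟫_ℂ).re

/-- `A` is trace class: the diagonal of `|A|` is summable. -/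
def IsTraceClass (e : HilbertBasis ℕ ℂ H) (A : H →L[ℂ] H) : Prop :=
  Summable fun n => (⟪e n, opAbs A (e n)⟫_ℂ).re

/-- `D` is diagonal in the basis `e` with real diagonal entries. -/
def RealDiag (e : HilbertBasis ℕ ℂ H) (D : H →L[ℂ] H) : Prop :=
  ∀ n, ∃ d : ℝ, D (e n) = (d : ℂ) • e n

/-- Distance from `C` to the compact real diagonal operators, in operator norm. -/
def diagDistK (e : HilbertBasis ℕ ℂ H) (C : H →L[ℂ] H) : ℝ :=
  ⨅ D : {D : H →L[ℂ] H // IsCompactOperator ⇑D ∧ RealDiag e D}, ‖C + (D : H →L[ℂ] H)‖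

/-- Positive part `X⁺ = (|X| + X)/2`. -/
def opPosPart (X : H →L[ℂ] H) : H →L[ℂ] H := (2⁻¹ : ℂ) • (opAbs X + X)

/-- Negative part `X⁻ = (|X| - X)/2`. -/
def opNegPart (X : H →L[ℂ] H) : H →L[ℂ] H := (2⁻¹ : ℂ) • (opAbs X - X)

section Aux

set_option maxHeartbeats 1000000
set_option synthInstance.maxHeartbeats 400000

lemma opAbs_eq_cfc (X : H →L[ℂ] H) (hXsa : IsSelfAdjoint X) :
    opAbs X = cfc (fun t : ℝ => |t|) X := by
  unfold opAbs
  rw [hXsa.adjoint_eq]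
  refine CFC.sqrt_unique ?_ (cfc_nonneg (fun x _ => abs_nonneg x))
  rw [← cfc_mul _ _ X]
  calc cfc (fun t : ℝ => |t| * |t|) X = cfc (fun t : ℝ => t * t) X := by
        refine cfc_congr fun x _ => abs_mul_abs_self x
    _ = X * X := by rw [cfc_mul _ _ X, cfc_id' ℝ X]

lemma opPosPart_eq_cfc (X : H →L[ℂ] H) (hXsa : IsSelfAdjoint X) :
    opPosPart X = cfc (fun t : ℝ => 2⁻¹ * (|t| + t)) X := by
  unfold opPosPart
  rw [opAbs_eq_cfc X hXsa]
  rw [cfc_const_mul (2⁻¹ : ℝ) (fun t : ℝ => |t| + t) X,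
    cfc_add (a := X) (fun t : ℝ => |t|) (fun t : ℝ => t), cfc_id' ℝ X, ← Complex.coe_smul]
  norm_num

lemma opNegPart_eq_cfc (X : H →L[ℂ] H) (hXsa : IsSelfAdjoint X) :
    opNegPart X = cfc (fun t : ℝ => 2⁻¹ * (|t| - t)) X := by
  unfold opNegPart
  rw [opAbs_eq_cfc X hXsa]
  rw [cfc_const_mul (2⁻¹ : ℝ) (fun t : ℝ => |t| - t) X,
    cfc_sub (fun t : ℝ => |t|) (fun t : ℝ => t) X, cfc_id' ℝ X, ← Complex.coe_smul]
  norm_num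

lemma parseval_sq (e : HilbertBasis ℕ ℂ H) (x : H) :
    HasSum (fun n => ‖⟪e n, x⟫_ℂ‖ ^ 2) (‖x‖ ^ 2) := by
  have h := e.hasSum_inner_mul_inner x x
  have key : ∀ n : ℕ, ⟪x, e n⟫_ℂ * ⟪e n, x⟫_ℂ = ((‖⟪e n, x⟫_ℂ‖ ^ 2 : ℝ) : ℂ) := by
    intro n
    rw [← inner_conj_symm (e n) x, Complex.mul_conj']
    norm_cast
    simp
    exact norm_inner_symm x _
  rw [funext key] at h
  have h2 := Complex.hasSum_re h
  have hx : (⟪x, x⟫_ℂ).re = ‖x‖ ^ 2 := by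
    simpa using inner_self_eq_norm_sq (𝕜 := ℂ) x
  rw [hx] at h2
  simpa [← Complex.ofReal_pow] using h2

lemma cyclic (e : HilbertBasis ℕ ℂ H) (R A : H →L[ℂ] H) (hR : IsSelfAdjoint R)
    (hsum : Summable fun n => ‖R (e n)‖ ^ 2) :
    HasSum (fun n => ⟪e n, R (R (A (e n)))⟫_ℂ) (∑' m, ⟪R (e m), A (R (e m))⟫_ℂ)
      ∧ Summable (fun m => ⟪R (e m), A (R (e m))⟫_ℂ) := by
  classical
  set c : ℕ × ℕ → ℂ := fun p =>
    ⟪ContinuousLinearMap.adjoint A (R (e p.1)), e p.2⟫_ℂ * ⟪e p.2, R (e p.1)⟫_ℂ with hc_def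
  have hbound : ∀ m n : ℕ, ‖c (m, n)‖ ≤
      (‖⟪e n, ContinuousLinearMap.adjoint A (R (e m))⟫_ℂ‖ ^ 2 + ‖⟪e n, R (e m)⟫_ℂ‖ ^ 2) / 2 := by
    intro m n
    have h1 : ‖c (m, n)‖ = ‖⟪e n, ContinuousLinearMap.adjoint A (R (e m))⟫_ℂ‖ *
        ‖⟪e n, R (e m)⟫_ℂ‖ := by
      rw [hc_def]; simp only [norm_mul]
      rw [norm_inner_symm]
    rw [h1]
    nlinarith [sq_nonneg (‖⟪e n, ContinuousLinearMap.adjoint A (R (e m))⟫_ℂ‖ - ‖⟪e n, R (e m)⟫_ℂ‖)]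
  have hinner : ∀ m : ℕ, Summable fun n => ‖c (m, n)‖ := by
    intro m
    apply Summable.of_nonneg_of_le (fun n => norm_nonneg _) (fun n => hbound m n)
    exact (((parseval_sq e _).summable.add (parseval_sq e _).summable).div_const 2)
  have houter : Summable fun m => ∑' n, ‖c (m, n)‖ := by
    apply Summable.of_nonneg_of_le
      (fun m => tsum_nonneg fun n => norm_nonneg _)
      (fun m => ?_) ((hsum.mul_left ((‖A‖ ^ 2 + 1) / 2)))
    have hle : ∑' n, ‖c (m, n)‖ ≤
        (‖ContinuousLinearMap.adjoint A (R (e m))‖ ^ 2 + ‖R (e m)‖ ^ 2) / 2 := by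
      have := (hinner m).tsum_le_tsum (hbound m)
        (((parseval_sq e _).summable.add (parseval_sq e _).summable).div_const 2)
      refine this.trans ?_
      rw [tsum_div_const, ((parseval_sq e _).add (parseval_sq e _)).tsum_eq]
    refine hle.trans ?_
    have hAle : ‖ContinuousLinearMap.adjoint A (R (e m))‖ ≤ ‖A‖ * ‖R (e m)‖ := by
      calc ‖ContinuousLinearMap.adjoint A (R (e m))‖
          ≤ ‖ContinuousLinearMap.adjoint A‖ * ‖R (e m)‖ := le_opNorm _ _
        _ = ‖A‖ * ‖R (e m)‖ := by
            rw [ContinuousLinearMap.adjoint.norm_map A]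
    have h0 : (0:ℝ) ≤ ‖R (e m)‖ := norm_nonneg _
    nlinarith [norm_nonneg (ContinuousLinearMap.adjoint A (R (e m))), norm_nonneg A]
  have hcnorm : Summable fun p : ℕ × ℕ => ‖c p‖ := by
    apply (summable_prod_of_nonneg (fun p => norm_nonneg _)).2
    exact ⟨hinner, houter⟩
  have hcs : Summable c := hcnorm.of_norm
  have hS : HasSum c (∑' p, c p) := hcs.hasSum
  have fib1 : ∀ m : ℕ, HasSum (fun n => c (m, n)) ⟪R (e m), A (R (e m))⟫_ℂ := by
    intro m
    have := e.hasSum_inner_mul_inner (ContinuousLinearMap.adjoint A (R (e m))) (R (e m))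
    rwa [adjoint_inner_left] at this
  have main1 : HasSum (fun m => ⟪R (e m), A (R (e m))⟫_ℂ) (∑' p, c p) :=
    hS.prod_fiberwise fib1
  have fib2 : ∀ n : ℕ, HasSum (fun m => c (m, n)) ⟪e n, R (R (A (e n)))⟫_ℂ := by
    intro n
    have key : (fun m => c (m, n)) = fun m => ⟪R (e n), e m⟫_ℂ * ⟪e m, R (A (e n))⟫_ℂ := by
      funext m
      rw [hc_def]
      simp only
      rw [adjoint_inner_left, ← hR.adjoint_eq, adjoint_inner_left, hR.adjoint_eq]
      rw [show ⟪e n, R (e m)⟫_ℂ = ⟪R (e n), e m⟫_ℂ by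
        rw [← hR.adjoint_eq, adjoint_inner_left, hR.adjoint_eq]]
      ring
    rw [key]
    have := e.hasSum_inner_mul_inner (R (e n)) (R (A (e n)))
    rwa [show ⟪R (e n), R (A (e n))⟫_ℂ = ⟪e n, R (R (A (e n)))⟫_ℂ by
      rw [← hR.adjoint_eq, adjoint_inner_left, hR.adjoint_eq]] at this
  have main2 : HasSum (fun n => ⟪e n, R (R (A (e n)))⟫_ℂ) (∑' p, c p) := by
    have hswap : HasSum (c ∘ (Equiv.prodComm ℕ ℕ)) (∑' p, c p) :=
      (Equiv.prodComm ℕ ℕ).hasSum_iff.2 hS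
    exact hswap.prod_fiberwise fib2
  exact ⟨main1.tsum_eq ▸ main2, main1.summable⟩

/-- If `‖A‖ = 1` and `re ⟪v, A v⟫ = ‖v‖²` then `A v = v`. -/
lemma fixed_of_inner_eq (A : H →L[ℂ] H) (hA : ‖A‖ = 1) (v : H)
    (h : (⟪v, A v⟫_ℂ).re = ‖v‖ ^ 2) : A v = v := by
  have h1 : ‖A v‖ ≤ ‖v‖ := by
    have := A.le_opNorm v
    rwa [hA, one_mul] at this
  have h2 : ‖A v - v‖ ^ 2 ≤ 0 := by
    rw [norm_sub_sq (𝕜 := ℂ)]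
    have h3 : RCLike.re ⟪A v, v⟫_ℂ = ‖v‖ ^ 2 := by
      rw [inner_re_symm]; exact h
    rw [h3]
    nlinarith [norm_nonneg (A v), norm_nonneg v]
  have := sq_nonneg ‖A v - v‖
  have h4 : ‖A v - v‖ = 0 := by nlinarith
  rw [norm_eq_zero, sub_eq_zero] at h4
  exact h4

/-- If `‖A‖ = 1` and `re ⟪v, A v⟫ = -‖v‖²` then `A v = -v`. -/
lemma neg_fixed_of_inner_eq (A : H →L[ℂ] H) (hA : ‖A‖ = 1) (v : H)
    (h : (⟪v, A v⟫_ℂ).re = -‖v‖ ^ 2) : A v = -v := by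
  have h1 : ‖A v‖ ≤ ‖v‖ := by
    have := A.le_opNorm v
    rwa [hA, one_mul] at this
  have h2 : ‖A v + v‖ ^ 2 ≤ 0 := by
    rw [norm_add_sq (𝕜 := ℂ)]
    have h3 : RCLike.re ⟪A v, v⟫_ℂ = -‖v‖ ^ 2 := by
      rw [inner_re_symm]; exact h
    rw [h3]
    nlinarith [norm_nonneg (A v), norm_nonneg v]
  have := sq_nonneg ‖A v + v‖
  have h4 : ‖A v + v‖ = 0 := by nlinarith
  rw [norm_eq_zero, add_eq_zero_iff_eq_neg] at h4
  exact h4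

end Aux

theorem stmt_12 (e : HilbertBasis ℕ ℂ H) (A : H →L[ℂ] H)
    (hcomp : IsCompactOperator ⇑A) (hsa : IsSelfAdjoint A) (hA : ‖A‖ = 1)
    (X : H →L[ℂ] H) (hX : X ≠ 0) (hXsa : IsSelfAdjoint X) (hXtc : IsTraceClass e X)
    (hXdiag : ∀ n, ⟪e n, X (e n)⟫_ℂ = 0)
    (htr : opTrace e (X * A) = ((traceNorm e X : ℝ) : ℂ))
    (Ep Em : H →L[ℂ] H)
    (hEpsa : IsSelfAdjoint Ep) (hEpidem : Ep * Ep = Ep)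
    (hEp : ∀ x : H, Ep x = x ↔ A x = x)
    (hEmsa : IsSelfAdjoint Em) (hEmidem : Em * Em = Em)
    (hEm : ∀ x : H, Em x = x ↔ A x = -x) :
    A * X = X * A ∧ Ep * opPosPart X = opPosPart X ∧ Em * opNegPart X = opNegPart X := by
  classical
  -- square roots of the positive and negative parts
  set Rp : H →L[ℂ] H := cfc (fun t : ℝ => Real.sqrt (2⁻¹ * (|t| + t))) X with hRp_def
  set Rm : H →L[ℂ] H := cfc (fun t : ℝ => Real.sqrt (2⁻¹ * (|t| - t))) X with hRm_def
  have hRp_sa : IsSelfAdjoint Rp := cfc_predicate _ X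
  have hRm_sa : IsSelfAdjoint Rm := cfc_predicate _ X
  have hRp_sq : Rp * Rp = opPosPart X := by
    rw [hRp_def, ← cfc_mul _ _ X, opPosPart_eq_cfc X hXsa]
    refine cfc_congr fun x _ => Real.mul_self_sqrt (by nlinarith [neg_abs_le x])
  have hRm_sq : Rm * Rm = opNegPart X := by
    rw [hRm_def, ← cfc_mul _ _ X, opNegPart_eq_cfc X hXsa]
    refine cfc_congr fun x _ => Real.mul_self_sqrt (by nlinarith [le_abs_self x])
  -- algebraic identities
  have hsum_parts : opPosPart X + opNegPart X = opAbs X := by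
    unfold opPosPart opNegPart
    rw [← smul_add]
    have h1 : (opAbs X + X) + (opAbs X - X) = (2 : ℂ) • opAbs X := by
      rw [two_smul]; abel
    rw [h1, smul_smul]
    norm_num
  have hdiff_parts : opPosPart X - opNegPart X = X := by
    unfold opPosPart opNegPart
    rw [← smul_sub]
    have h1 : (opAbs X + X) - (opAbs X - X) = (2 : ℂ) • X := by
      rw [two_smul]; abel
    rw [h1, smul_smul]
    norm_num
  have hinner_sq : ∀ (R : H →L[ℂ] H), IsSelfAdjoint R → ∀ v : H,
      ⟪v, R (R v)⟫_ℂ = ((‖R v‖ ^ 2 : ℝ) : ℂ) := by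
    intro R hR v
    calc ⟪v, R (R v)⟫_ℂ = ⟪ContinuousLinearMap.adjoint R v, R v⟫_ℂ :=
          (adjoint_inner_left R (R v) v).symm
      _ = ⟪R v, R v⟫_ℂ := by rw [hR.adjoint_eq]
      _ = ((‖R v‖ ^ 2 : ℝ) : ℂ) := by
          rw [inner_self_eq_norm_sq_to_K]; norm_cast
  have hXeq : X = Rp * Rp - Rm * Rm := by rw [hRp_sq, hRm_sq, hdiff_parts]
  have habseq : opAbs X = Rp * Rp + Rm * Rm := by rw [hRp_sq, hRm_sq, hsum_parts]
  have hdiag : ∀ n, (⟪e n, opAbs X (e n)⟫_ℂ).re = ‖Rp (e n)‖ ^ 2 + ‖Rm (e n)‖ ^ 2 := by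
    intro n
    rw [habseq]
    rw [show (Rp * Rp + Rm * Rm) (e n) = Rp (Rp (e n)) + Rm (Rm (e n)) from rfl]
    rw [inner_add_right, hinner_sq Rp hRp_sa, hinner_sq Rm hRm_sa]
    norm_cast
  have htc' : Summable (fun n => ‖Rp (e n)‖ ^ 2 + ‖Rm (e n)‖ ^ 2) := hXtc.congr hdiag
  have hsp : Summable fun n => ‖Rp (e n)‖ ^ 2 :=
    htc'.of_nonneg_of_le (fun n => sq_nonneg _)
      (fun n => le_add_of_nonneg_right (sq_nonneg _))
  have hsm : Summable fun n => ‖Rm (e n)‖ ^ 2 :=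
    htc'.of_nonneg_of_le (fun n => sq_nonneg _)
      (fun n => le_add_of_nonneg_left (sq_nonneg _))
  have hT : HasSum (fun n => ‖Rp (e n)‖ ^ 2 + ‖Rm (e n)‖ ^ 2) (traceNorm e X) := by
    have h1 : traceNorm e X = ∑' n, (‖Rp (e n)‖ ^ 2 + ‖Rm (e n)‖ ^ 2) := tsum_congr hdiag
    rw [h1]
    exact htc'.hasSum
  obtain ⟨Hp, sp_summ⟩ := cyclic e Rp A hRp_sa hsp
  obtain ⟨Hm, sm_summ⟩ := cyclic e Rm A hRm_sa hsm
  set Sp : ℂ := ∑' m, ⟪Rp (e m), A (Rp (e m))⟫_ℂ with hSp_def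
  set Sm : ℂ := ∑' m, ⟪Rm (e m), A (Rm (e m))⟫_ℂ with hSm_def
  have htrace_eq : opTrace e (X * A) = Sp - Sm := by
    unfold opTrace
    have hterm : ∀ n, ⟪e n, (X * A) (e n)⟫_ℂ
        = ⟪e n, Rp (Rp (A (e n)))⟫_ℂ - ⟪e n, Rm (Rm (A (e n)))⟫_ℂ := by
      intro n
      rw [show (X * A) (e n) = X (A (e n)) from rfl, hXeq]
      rw [show (Rp * Rp - Rm * Rm) (A (e n)) = Rp (Rp (A (e n))) - Rm (Rm (A (e n))) from rfl]
      rw [inner_sub_right]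
    rw [tsum_congr hterm]
    exact (Hp.sub Hm).tsum_eq
  have hre : Sp.re - Sm.re = traceNorm e X := by
    have h := htrace_eq ▸ htr
    have := congrArg Complex.re h
    simpa using this
  have hp' : HasSum (fun m => (⟪Rp (e m), A (Rp (e m))⟫_ℂ).re) Sp.re :=
    Complex.hasSum_re sp_summ.hasSum
  have hm' : HasSum (fun m => (⟪Rm (e m), A (Rm (e m))⟫_ℂ).re) Sm.re :=
    Complex.hasSum_re sm_summ.hasSum
  set f : ℕ → ℝ := fun m => ‖Rp (e m)‖ ^ 2 - (⟪Rp (e m), A (Rp (e m))⟫_ℂ).re with hf_def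
  set g : ℕ → ℝ := fun m => ‖Rm (e m)‖ ^ 2 + (⟪Rm (e m), A (Rm (e m))⟫_ℂ).re with hg_def
  have hzero : HasSum (fun m => f m + g m) 0 := by
    have h := hT.sub (hp'.sub hm')
    rw [hre, sub_self] at h
    refine (congrArg (HasSum · 0) ?_).mpr h
    funext m
    rw [hf_def, hg_def]
    ring
  have hfb : ∀ v : H, |(⟪v, A v⟫_ℂ).re| ≤ ‖v‖ ^ 2 := by
    intro v
    have h1 : |(⟪v, A v⟫_ℂ).re| ≤ ‖⟪v, A v⟫_ℂ‖ := by
      exact Complex.abs_re_le_norm _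
    have h2 : ‖⟪v, A v⟫_ℂ‖ ≤ ‖v‖ * ‖A v‖ := norm_inner_le_norm _ _
    have h3 : ‖A v‖ ≤ ‖v‖ := by
      have := A.le_opNorm v; rwa [hA, one_mul] at this
    nlinarith [norm_nonneg v]
  have hf_nonneg : ∀ m, 0 ≤ f m := by
    intro m
    have := hfb (Rp (e m))
    rw [hf_def]
    simp only
    have := abs_le.1 this
    linarith [this.2]
  have hg_nonneg : ∀ m, 0 ≤ g m := by
    intro m
    have := hfb (Rm (e m))
    rw [hg_def]
    simp only
    have := abs_le.1 this
    linarith [this.1]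
  have hterm0 : ∀ m, f m = 0 ∧ g m = 0 := by
    intro m
    have hle : f m + g m ≤ 0 :=
      le_hasSum hzero m (fun k _ => add_nonneg (hf_nonneg k) (hg_nonneg k))
    constructor <;> [skip; skip] <;>
      linarith [hf_nonneg m, hg_nonneg m]
  have hfixp : ∀ m, A (Rp (e m)) = Rp (e m) := by
    intro m
    refine fixed_of_inner_eq A hA _ ?_
    have := (hterm0 m).1
    rw [hf_def] at this
    simp only at this
    linarith
  have hfixm : ∀ m, A (Rm (e m)) = -(Rm (e m)) := by
    intro m
    refine neg_fixed_of_inner_eq A hA _ ?_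
    have := (hterm0 m).2
    rw [hg_def] at this
    simp only at this
    linarith
  have hdense : Dense (↑(Submodule.span ℂ (Set.range (⇑e))) : Set H) :=
    Submodule.dense_iff_topologicalClosure_eq_top.2 e.dense_span
  have hARp : A * Rp = Rp := by
    refine ContinuousLinearMap.ext_on hdense ?_
    rintro x ⟨m, rfl⟩
    rw [ContinuousLinearMap.mul_apply]
    exact hfixp m
  have hARm : A * Rm = -Rm := by
    refine ContinuousLinearMap.ext_on hdense ?_
    rintro x ⟨m, rfl⟩
    rw [ContinuousLinearMap.mul_apply, ContinuousLinearMap.neg_apply]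
    exact hfixm m
  have hAXp : A * opPosPart X = opPosPart X := by
    rw [← hRp_sq, ← mul_assoc, hARp]
  have hAXm : A * opNegPart X = -opNegPart X := by
    rw [← hRm_sq, ← mul_assoc, hARm, neg_mul]
  have hXp_sa : IsSelfAdjoint (opPosPart X) := by
    rw [← hRp_sq]
    show star (Rp * Rp) = Rp * Rp
    rw [star_mul, hRp_sa.star_eq]
  have hXm_sa : IsSelfAdjoint (opNegPart X) := by
    rw [← hRm_sq]
    show star (Rm * Rm) = Rm * Rm
    rw [star_mul, hRm_sa.star_eq]
  have hXpA : opPosPart X * A = opPosPart X := by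
    have h := congrArg star hAXp
    rwa [star_mul, hXp_sa.star_eq, hsa.star_eq] at h
  have hXmA : opNegPart X * A = -opNegPart X := by
    have h := congrArg star hAXm
    rwa [star_mul, hXm_sa.star_eq, hsa.star_eq, star_neg, hXm_sa.star_eq] at h
  refine ⟨?_, ?_, ?_⟩
  · calc A * X = A * (opPosPart X - opNegPart X) := by rw [hdiff_parts]
      _ = opPosPart X + opNegPart X := by rw [mul_sub, hAXp, hAXm, sub_neg_eq_add]
      _ = (opPosPart X - opNegPart X) * A := by rw [sub_mul, hXpA, hXmA, sub_neg_eq_add]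
      _ = X * A := by rw [hdiff_parts]
  · ext x
    rw [ContinuousLinearMap.mul_apply]
    refine (hEp _).2 ?_
    have h := congrArg (fun T : H →L[ℂ] H => T x) hAXp
    simpa using h
  · ext x
    rw [ContinuousLinearMap.mul_apply]
    refine (hEm _).2 ?_
    have h := congrArg (fun T : H →L[ℂ] H => T x) hAXm
    simpa using h
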